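/- If v_1, ..., v_N ∈ C^r form an ETF and y ∈ C^r is a unit vector, then ∑_{i=1}^N |⟨y, v_i⟩|⁴ ≤ (N/r + r - 2)/(r(1 - 1/N)). -/

import Mathlib

open Matrix BigOperators

set_option maxHeartbeats 1000000 in
/-- For an ETF and any unit vector `y`, `∑ᵢ |⟨y, vᵢ⟩|⁴ ≤ (N/r + r - 2)/(r(1-1/N))`. -/
theorem stmt_11 (N r : ℕ) (hr : 2 ≤ r) (hNr : r < N)
    (v : Fin N → Fin r → ℂ)
    (hunit : ∀ i, ∑ k, ‖v i k‖ ^ 2 = 1)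
    (htight : (∑ i, Matrix.vecMulVec (v i) (fun l => (starRingEnd ℂ) (v i l)))
      = ((N : ℂ) / (r : ℂ)) • (1 : Matrix (Fin r) (Fin r) ℂ))
    (α : ℝ)
    (heq : ∀ i j : Fin N, i ≠ j → ‖∑ k, (starRingEnd ℂ) (v i k) * v j k‖ = α)
    (y : Fin r → ℂ) (hy : ∑ k, ‖y k‖ ^ 2 = 1) :
    ∑ i, ‖∑ k, (starRingEnd ℂ) (y k) * v i k‖ ^ 4
      ≤ ((N : ℝ) / (r : ℝ) + (r : ℝ) - 2) / ((r : ℝ) * (1 - 1 / (N : ℝ))) := by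
  classical
  have hrR : (2:ℝ) ≤ (r:ℝ) := by exact_mod_cast hr
  have hNR : (r:ℝ) < (N:ℝ) := by exact_mod_cast hNr
  have hrpos : (0:ℝ) < (r:ℝ) := by linarith
  have hNpos : (0:ℝ) < (N:ℝ) := by linarith
  have hN1 : (1:ℝ) < (N:ℝ) := by linarith
  -- helper: z * conj z = ‖z‖²
  have hmc : ∀ z : ℂ, z * (starRingEnd ℂ) z = ((‖z‖^2 : ℝ) : ℂ) := by
    intro z; rw [Complex.mul_conj, Complex.sq_norm]
  have hcm : ∀ z : ℂ, (starRingEnd ℂ) z * z = ((‖z‖^2 : ℝ) : ℂ) := by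
    intro z; rw [mul_comm]; exact hmc z
  -- product-sum factorization over pairs
  have prodsumR : ∀ (F H : Fin r → ℝ),
      (∑ p : Fin r × Fin r, F p.1 * H p.2) = (∑ k, F k) * (∑ l, H l) := by
    intro F H; rw [Finset.sum_mul_sum, Fintype.sum_prod_type]
  have prodsum : ∀ (F H : Fin r → ℂ),
      (∑ p : Fin r × Fin r, F p.1 * H p.2) = (∑ k, F k) * (∑ l, H l) := by
    intro F H; rw [Finset.sum_mul_sum, Fintype.sum_prod_type]
  -- entrywise tightness
  have hT : ∀ k l, (∑ i, v i k * (starRingEnd ℂ) (v i l))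
      = ((N:ℂ)/(r:ℂ)) * (if k = l then 1 else 0) := by
    intro k l
    have h := congrFun (congrFun htight k) l
    simpa [Matrix.sum_apply, Matrix.vecMulVec_apply, Matrix.one_apply, Matrix.smul_apply,
      mul_ite, mul_one, mul_zero] using h
  -- key bilinear identity
  have key : ∀ a b : Fin r → ℂ,
      (∑ i, (∑ k, a k * v i k) * (∑ l, b l * (starRingEnd ℂ) (v i l)))
        = ((N:ℂ)/(r:ℂ)) * ∑ k, a k * b k := by
    intro a b
    calc (∑ i, (∑ k, a k * v i k) * (∑ l, b l * (starRingEnd ℂ) (v i l)))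
        = ∑ i, ∑ k, ∑ l, (a k * b l) * (v i k * (starRingEnd ℂ) (v i l)) := by
          refine Finset.sum_congr rfl fun i _ => ?_
          rw [Finset.sum_mul_sum]
          exact Finset.sum_congr rfl fun k _ => Finset.sum_congr rfl fun l _ => by ring
      _ = ∑ k, ∑ l, (a k * b l) * (∑ i, v i k * (starRingEnd ℂ) (v i l)) := by
          rw [Finset.sum_comm]
          refine Finset.sum_congr rfl fun k _ => ?_
          rw [Finset.sum_comm]
          exact Finset.sum_congr rfl fun l _ => (Finset.mul_sum _ _ _).symm
      _ = ∑ k, (a k * b k) * ((N:ℂ)/(r:ℂ)) := by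
          refine Finset.sum_congr rfl fun k _ => ?_
          rw [Finset.sum_eq_single k]
          · rw [hT]; simp
          · intro l _ hlk; rw [hT]; simp [Ne.symm hlk]
          · simp
      _ = ((N:ℂ)/(r:ℂ)) * ∑ k, a k * b k := by
          rw [Finset.mul_sum]; exact Finset.sum_congr rfl fun k _ => by ring
  -- the inner products
  set u : Fin N → ℂ := fun i => ∑ k, (starRingEnd ℂ) (y k) * v i k with hu
  have hconju : ∀ i, (starRingEnd ℂ) (u i) = ∑ l, y l * (starRingEnd ℂ) (v i l) := by
    intro i; simp [hu, map_sum, _root_.map_mul]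
  set c : Fin N → ℝ := fun i => ‖u i‖^2 with hc
  -- unit-norm facts in ℂ
  have hyC : (∑ k, (starRingEnd ℂ) (y k) * y k) = 1 := by
    have h1 : ((∑ k, ‖y k‖^2 : ℝ) : ℂ) = ∑ k, (starRingEnd ℂ) (y k) * y k := by
      rw [Complex.ofReal_sum]
      exact Finset.sum_congr rfl fun k _ => (hcm (y k)).symm
    rw [← h1, hy]; norm_num
  have hyC' : (∑ k, y k * (starRingEnd ℂ) (y k)) = 1 := by
    rw [← hyC]; exact Finset.sum_congr rfl fun k _ => mul_comm _ _
  have hvC : ∀ i, (∑ k, (starRingEnd ℂ) (v i k) * v i k) = 1 := by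
    intro i
    have h1 : ((∑ k, ‖v i k‖^2 : ℝ) : ℂ) = ∑ k, (starRingEnd ℂ) (v i k) * v i k := by
      rw [Complex.ofReal_sum]
      exact Finset.sum_congr rfl fun k _ => (hcm (v i k)).symm
    rw [← h1, hunit i]; norm_num
  -- sum of c equals N/r
  have hsumcC : (∑ i, ((c i : ℝ) : ℂ)) = (N:ℂ)/(r:ℂ) := by
    calc (∑ i, ((c i : ℝ) : ℂ)) = ∑ i, u i * (starRingEnd ℂ) (u i) :=
          Finset.sum_congr rfl fun i _ => (hmc (u i)).symm
      _ = ∑ i, (∑ k, (starRingEnd ℂ) (y k) * v i k) * (∑ l, y l * (starRingEnd ℂ) (v i l)) :=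
          Finset.sum_congr rfl fun i _ => by rw [hconju i]
      _ = ((N:ℂ)/(r:ℂ)) * ∑ k, (starRingEnd ℂ) (y k) * y k := key _ _
      _ = (N:ℂ)/(r:ℂ) := by rw [hyC, mul_one]
  have hsumc : (∑ i, c i) = (N:ℝ)/(r:ℝ) := by
    have h2 : ((∑ i, c i : ℝ) : ℂ) = (((N:ℝ)/(r:ℝ)) : ℂ) := by
      rw [Complex.ofReal_sum, hsumcC]; push_cast; ring
    exact_mod_cast h2
  -- Gram entries
  set G : Fin N → Fin N → ℂ := fun i j => ∑ k, (starRingEnd ℂ) (v i k) * v j k with hG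
  have hconjG : ∀ i j, (starRingEnd ℂ) (G i j) = ∑ l, v i l * (starRingEnd ℂ) (v j l) := by
    intro i j; simp [hG, map_sum, _root_.map_mul]
  -- second moment: ∑_{i,j} |G i j|² = N²/r
  have hBC : (∑ j, ∑ i, ((‖G i j‖^2 : ℝ) : ℂ)) = (N:ℂ)^2/(r:ℂ) := by
    have hinner : ∀ j, (∑ i, ((‖G i j‖^2 : ℝ) : ℂ)) = (N:ℂ)/(r:ℂ) := by
      intro j
      calc (∑ i, ((‖G i j‖^2 : ℝ) : ℂ)) = ∑ i, G i j * (starRingEnd ℂ) (G i j) :=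
            Finset.sum_congr rfl fun i _ => (hmc (G i j)).symm
        _ = ∑ i, (∑ l, (starRingEnd ℂ) (v j l) * v i l) * (∑ k, v j k * (starRingEnd ℂ) (v i k)) := by
            refine Finset.sum_congr rfl fun i _ => ?_
            rw [hconjG i j, mul_comm]
            congr 1
            · exact Finset.sum_congr rfl fun l _ => by ring
            · exact Finset.sum_congr rfl fun k _ => by ring
        _ = ((N:ℂ)/(r:ℂ)) * ∑ k, (starRingEnd ℂ) (v j k) * v j k := key _ _
        _ = (N:ℂ)/(r:ℂ) := by rw [hvC j, mul_one]
    rw [Finset.sum_congr rfl fun j _ => hinner j]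
    simp [Finset.sum_const]
    field_simp
  have hBR : (∑ j, ∑ i, ‖G i j‖^2) = (N:ℝ)^2/(r:ℝ) := by
    have h2 : ((∑ j, ∑ i, ‖G i j‖^2 : ℝ) : ℂ) = ((((N:ℝ)^2/(r:ℝ)) : ℝ) : ℂ) := by
      rw [Complex.ofReal_sum]
      rw [Finset.sum_congr rfl fun j (_ : j ∈ Finset.univ) => (Complex.ofReal_sum _ _ : _)]
      rw [hBC]; push_cast; ring
    exact_mod_cast h2
  -- G i i = 1, and norms
  have hGdiag : ∀ i, ‖G i i‖^2 = 1 := by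
    intro i; rw [hG]; simp only; rw [hvC i]; simp
  have hGoff : ∀ i j, i ≠ j → ‖G i j‖^2 = α^2 := by
    intro i j hij; rw [hG]; simp only; rw [heq i j hij]
  -- α² value
  have halpha : (N:ℝ) + (N:ℝ)*((N:ℝ)-1)*α^2 = (N:ℝ)^2/(r:ℝ) := by
    have hsplit : ∀ j : Fin N, (∑ i, ‖G i j‖^2) = 1 + ((N:ℝ)-1)*α^2 := by
      intro j
      rw [← Finset.sum_erase_add _ _ (Finset.mem_univ j), hGdiag j]
      have h3 : (∑ i ∈ Finset.univ.erase j, ‖G i j‖^2) = ((N:ℝ)-1)*α^2 := by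
        rw [Finset.sum_congr rfl (fun i hi => hGoff i j (Finset.ne_of_mem_erase hi))]
        rw [Finset.sum_const, Finset.card_erase_of_mem (Finset.mem_univ _), Finset.card_univ,
          Fintype.card_fin, nsmul_eq_mul]
        congr 1
        have h4 : (1:ℕ) ≤ N := by omega
        push_cast [Nat.cast_sub h4]
        ring
      rw [h3]; ring
    have h5 := hBR
    rw [Finset.sum_congr rfl (fun j _ => hsplit j)] at h5
    rw [Finset.sum_const, Finset.card_univ, Fintype.card_fin, nsmul_eq_mul] at h5
    nlinarith [h5]
  have hN1ne : (N:ℝ) - 1 ≠ 0 := by linarith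
  have halpha2 : α^2 = ((N:ℝ)-(r:ℝ))/((r:ℝ)*((N:ℝ)-1)) := by
    have hne : ((r:ℝ)*((N:ℝ)-1)) ≠ 0 := by nlinarith
    rw [eq_div_iff hne]
    apply mul_left_cancel₀ (show (N:ℝ) ≠ 0 from ne_of_gt hNpos)
    have h3 : ((N:ℝ) + (N:ℝ)*((N:ℝ)-1)*α^2) * (r:ℝ) = (N:ℝ)^2 := by
      rw [halpha]; field_simp
    linear_combination h3
  -- the deviations d i = c i - 1/r
  set d : Fin N → ℝ := fun i => c i - 1/(r:ℝ) with hdd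
  have hd0 : (∑ i, d i) = 0 := by
    simp only [hdd, Finset.sum_sub_distrib, hsumc, Finset.sum_const, Finset.card_univ,
      Fintype.card_fin, nsmul_eq_mul]
    field_simp
    ring
  set S : ℝ := ∑ i, d i^2 with hS
  have hSnn : 0 ≤ S := Finset.sum_nonneg fun i _ => sq_nonneg _
  -- the matrix D = ∑ d i • v i v i*
  set D : Fin r × Fin r → ℂ :=
    fun p => ∑ i, ((d i : ℝ):ℂ) * (v i p.1 * (starRingEnd ℂ) (v i p.2)) with hD
  have hconjD : ∀ p : Fin r × Fin r,
      (starRingEnd ℂ) (D p) = ∑ j, ((d j:ℝ):ℂ) * ((starRingEnd ℂ) (v j p.1) * v j p.2) := by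
    intro p; simp [hD, map_sum, _root_.map_mul, Complex.conj_ofReal]
  -- ‖D‖² = (1 - α²) S
  have hDD : (∑ p : Fin r × Fin r, D p * (starRingEnd ℂ) (D p))
      = ∑ i, ∑ j, ((d i:ℝ):ℂ) * ((d j:ℝ):ℂ) * ((starRingEnd ℂ) (G i j) * G i j) := by
    calc (∑ p : Fin r × Fin r, D p * (starRingEnd ℂ) (D p))
        = ∑ p : Fin r × Fin r, ∑ i, ∑ j, ((d i:ℝ):ℂ)*((d j:ℝ):ℂ) *
            ((v i p.1 * (starRingEnd ℂ) (v j p.1)) * ((starRingEnd ℂ) (v i p.2) * v j p.2)) := by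
          refine Finset.sum_congr rfl fun p _ => ?_
          rw [hconjD p, hD]
          simp only
          rw [Finset.sum_mul_sum]
          exact Finset.sum_congr rfl fun i _ => Finset.sum_congr rfl fun j _ => by ring
      _ = ∑ i, ∑ j, ∑ p : Fin r × Fin r, ((d i:ℝ):ℂ)*((d j:ℝ):ℂ) *
            ((v i p.1 * (starRingEnd ℂ) (v j p.1)) * ((starRingEnd ℂ) (v i p.2) * v j p.2)) := by
          rw [Finset.sum_comm]
          exact Finset.sum_congr rfl fun i _ => Finset.sum_comm
      _ = ∑ i, ∑ j, ((d i:ℝ):ℂ) * ((d j:ℝ):ℂ) * ((starRingEnd ℂ) (G i j) * G i j) := by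
          refine Finset.sum_congr rfl fun i _ => Finset.sum_congr rfl fun j _ => ?_
          rw [← Finset.mul_sum,
            prodsum (fun k => v i k * (starRingEnd ℂ) (v j k))
              (fun l => (starRingEnd ℂ) (v i l) * v j l)]
          rw [hconjG i j, hG]
  have hDDR : (∑ p : Fin r × Fin r, ‖D p‖^2) = (1 - α^2) * S := by
    have hreal : (∑ i, ∑ j, d i * d j * ‖G i j‖^2) = (1 - α^2) * S := by
      have hgij : ∀ i j : Fin N, ‖G i j‖^2 = α^2 + (if j = i then 1 - α^2 else 0) := by
        intro i j; by_cases h : j = i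
        · subst h; rw [hGdiag]; simp
        · rw [hGoff i j (Ne.symm h)]; simp [h]
      calc (∑ i, ∑ j, d i * d j * ‖G i j‖^2)
          = ∑ i, ∑ j, ((d i * α^2) * d j + (if j = i then d i * d j * (1-α^2) else 0)) := by
            refine Finset.sum_congr rfl fun i _ => Finset.sum_congr rfl fun j _ => ?_
            rw [hgij]; by_cases h : j = i <;> simp [h] <;> ring
        _ = ∑ i, ((d i * α^2) * (∑ j, d j) + d i * d i * (1-α^2)) := by
            refine Finset.sum_congr rfl fun i _ => ?_
            rw [Finset.sum_add_distrib, ← Finset.mul_sum, Finset.sum_ite_eq']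
            simp
        _ = (1 - α^2) * S := by
            rw [hd0]
            simp only [mul_zero, zero_add]
            rw [hS, Finset.mul_sum]
            exact Finset.sum_congr rfl fun i _ => by ring
    have h2 : ((∑ p : Fin r × Fin r, ‖D p‖^2 : ℝ) : ℂ) = (((1-α^2)*S : ℝ) : ℂ) := by
      rw [Complex.ofReal_sum]
      calc (∑ p : Fin r × Fin r, ((‖D p‖^2:ℝ):ℂ))
          = ∑ p : Fin r × Fin r, D p * (starRingEnd ℂ) (D p) :=
            Finset.sum_congr rfl fun p _ => (hmc (D p)).symm
        _ = ∑ i, ∑ j, ((d i:ℝ):ℂ) * ((d j:ℝ):ℂ) * ((starRingEnd ℂ) (G i j) * G i j) := hDD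
        _ = ∑ i, ∑ j, (((d i * d j * ‖G i j‖^2 : ℝ)):ℂ) := by
            refine Finset.sum_congr rfl fun i _ => Finset.sum_congr rfl fun j _ => ?_
            rw [hcm (G i j)]; push_cast; ring
        _ = ((∑ i, ∑ j, d i * d j * ‖G i j‖^2 : ℝ):ℂ) := by
            rw [Complex.ofReal_sum]
            exact Finset.sum_congr rfl fun i _ => (Complex.ofReal_sum _ _).symm
        _ = (((1-α^2)*S : ℝ) : ℂ) := by rw [hreal]
    exact_mod_cast h2
  -- the matrix Y₀ = y y* - (1/r) I
  set Y : Fin r × Fin r → ℂ :=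
    fun p => y p.1 * (starRingEnd ℂ) (y p.2) - (if p.1 = p.2 then (((1/(r:ℝ)):ℝ):ℂ) else 0) with hY
  -- inner product ⟨D, Y⟩ = S
  have hIP : (∑ p : Fin r × Fin r, (starRingEnd ℂ) (D p) * Y p) = ((S : ℝ) : ℂ) := by
    have hswap : (∑ p : Fin r × Fin r, (starRingEnd ℂ) (D p) * Y p)
        = ∑ j, ((d j:ℝ):ℂ) * (∑ p : Fin r × Fin r, ((starRingEnd ℂ) (v j p.1) * v j p.2) * Y p) := by
      calc (∑ p : Fin r × Fin r, (starRingEnd ℂ) (D p) * Y p)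
          = ∑ p : Fin r × Fin r, ∑ j, ((d j:ℝ):ℂ) * (((starRingEnd ℂ) (v j p.1) * v j p.2) * Y p) := by
            refine Finset.sum_congr rfl fun p _ => ?_
            rw [hconjD p, Finset.sum_mul]
            exact Finset.sum_congr rfl fun j _ => by ring
        _ = ∑ j, ∑ p : Fin r × Fin r, ((d j:ℝ):ℂ) * (((starRingEnd ℂ) (v j p.1) * v j p.2) * Y p) :=
            Finset.sum_comm
        _ = ∑ j, ((d j:ℝ):ℂ) * (∑ p : Fin r × Fin r, ((starRingEnd ℂ) (v j p.1) * v j p.2) * Y p) :=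
            Finset.sum_congr rfl fun j _ => (Finset.mul_sum _ _ _).symm
    have hper : ∀ j, (∑ p : Fin r × Fin r, ((starRingEnd ℂ) (v j p.1) * v j p.2) * Y p)
        = ((d j : ℝ):ℂ) := by
      intro j
      have hsplit : ∀ p : Fin r × Fin r, ((starRingEnd ℂ) (v j p.1) * v j p.2) * Y p
          = (y p.1 * (starRingEnd ℂ) (v j p.1)) * ((starRingEnd ℂ) (y p.2) * v j p.2)
            - (if p.1 = p.2 then (((1/(r:ℝ)):ℝ):ℂ) * ((starRingEnd ℂ) (v j p.1) * v j p.2) else 0) := by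
        intro p; rw [hY]; simp only
        by_cases h : p.1 = p.2 <;> simp [h] <;> ring
      rw [Finset.sum_congr rfl fun p _ => hsplit p, Finset.sum_sub_distrib]
      rw [prodsum (fun k => y k * (starRingEnd ℂ) (v j k)) (fun l => (starRingEnd ℂ) (y l) * v j l)]
      have h1 : (∑ k, y k * (starRingEnd ℂ) (v j k)) = (starRingEnd ℂ) (u j) := (hconju j).symm
      have h2 : (∑ l, (starRingEnd ℂ) (y l) * v j l) = u j := rfl
      rw [h1, h2]
      have h3 : (∑ p : Fin r × Fin r,
          if p.1 = p.2 then (((1/(r:ℝ)):ℝ):ℂ) * ((starRingEnd ℂ) (v j p.1) * v j p.2) else 0)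
          = (((1/(r:ℝ)):ℝ):ℂ) := by
        rw [Fintype.sum_prod_type]
        have h4 : ∀ k : Fin r,
            (∑ l, if k = l then (((1/(r:ℝ)):ℝ):ℂ) * ((starRingEnd ℂ) (v j k) * v j l) else 0)
            = (((1/(r:ℝ)):ℝ):ℂ) * ((starRingEnd ℂ) (v j k) * v j k) := by
          intro k; rw [Finset.sum_ite_eq]; simp
        rw [Finset.sum_congr rfl fun k _ => h4 k, ← Finset.mul_sum, hvC j, mul_one]
      rw [h3]
      have h5 : (starRingEnd ℂ) (u j) * u j = ((c j : ℝ) : ℂ) := hcm (u j)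
      rw [h5, hdd]
      push_cast
      ring
    rw [hswap, Finset.sum_congr rfl fun j _ => by rw [hper j]]
    rw [hS, Complex.ofReal_sum]
    exact Finset.sum_congr rfl fun j _ => by push_cast; ring
  -- ‖Y‖² = 1 - 1/r
  have hYn : (∑ p : Fin r × Fin r, ‖Y p‖^2) = 1 - 1/(r:ℝ) := by
    have hcase : ∀ p : Fin r × Fin r, ‖Y p‖^2 = ‖y p.1‖^2 * ‖y p.2‖^2
        - (if p.1 = p.2 then (2/(r:ℝ))*‖y p.1‖^2 - 1/(r:ℝ)^2 else 0) := by
      intro p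
      by_cases h : p.1 = p.2
      · have hval : ‖Y p‖^2 = (‖y p.1‖^2 - 1/(r:ℝ))^2 := by
          rw [hY]; simp only
          rw [if_pos h, ← h, hmc (y p.1), ← Complex.ofReal_sub, Complex.norm_real,
            Real.norm_eq_abs, sq_abs]
        rw [hval, if_pos h, ← h]
        ring
      · have hval : ‖Y p‖^2 = ‖y p.1‖^2 * ‖y p.2‖^2 := by
          rw [hY]; simp only
          rw [if_neg h, sub_zero, norm_mul, RCLike.norm_conj, mul_pow]
        rw [hval, if_neg h, sub_zero]
    rw [Finset.sum_congr rfl fun p _ => hcase p, Finset.sum_sub_distrib]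
    have h1 : (∑ p : Fin r × Fin r, ‖y p.1‖^2 * ‖y p.2‖^2) = 1 := by
      rw [prodsumR (fun k => ‖y k‖^2) (fun l => ‖y l‖^2), hy, mul_one]
    have h2 : (∑ p : Fin r × Fin r, if p.1 = p.2 then (2/(r:ℝ))*‖y p.1‖^2 - 1/(r:ℝ)^2 else 0)
        = 2/(r:ℝ) - 1/(r:ℝ) := by
      rw [Fintype.sum_prod_type]
      have h4 : ∀ k : Fin r, (∑ l, if k = l then (2/(r:ℝ))*‖y k‖^2 - 1/(r:ℝ)^2 else 0)
          = (2/(r:ℝ))*‖y k‖^2 - 1/(r:ℝ)^2 := by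
        intro k; rw [Finset.sum_ite_eq]; simp
      rw [Finset.sum_congr rfl fun k _ => h4 k, Finset.sum_sub_distrib, ← Finset.mul_sum, hy,
        Finset.sum_const, Finset.card_univ, Fintype.card_fin, nsmul_eq_mul, mul_one]
      field_simp
    rw [h1, h2]; ring
  -- Cauchy-Schwarz
  have hSle : S ≤ ∑ p : Fin r × Fin r, ‖D p‖ * ‖Y p‖ := by
    calc S ≤ |S| := le_abs_self S
      _ = ‖((S:ℝ):ℂ)‖ := by rw [Complex.norm_real, Real.norm_eq_abs]
      _ = ‖∑ p : Fin r × Fin r, (starRingEnd ℂ) (D p) * Y p‖ := by rw [hIP]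
      _ ≤ ∑ p : Fin r × Fin r, ‖(starRingEnd ℂ) (D p) * Y p‖ := norm_sum_le _ _
      _ = ∑ p : Fin r × Fin r, ‖D p‖ * ‖Y p‖ :=
          Finset.sum_congr rfl fun p _ => by rw [norm_mul, RCLike.norm_conj]
  have hCS : (∑ p : Fin r × Fin r, ‖D p‖ * ‖Y p‖)^2 ≤ ((1-α^2)*S) * (1 - 1/(r:ℝ)) := by
    calc (∑ p : Fin r × Fin r, ‖D p‖ * ‖Y p‖)^2
        ≤ (∑ p : Fin r × Fin r, ‖D p‖^2) * (∑ p : Fin r × Fin r, ‖Y p‖^2) :=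
          Finset.sum_mul_sq_le_sq_mul_sq _ _ _
      _ = ((1-α^2)*S) * (1 - 1/(r:ℝ)) := by rw [hDDR, hYn]
  have h1a : 0 ≤ 1 - α^2 := by
    rw [halpha2]
    rw [sub_nonneg, div_le_one (by nlinarith)]
    nlinarith
  have hrinv : 0 ≤ 1 - 1/(r:ℝ) := by
    rw [sub_nonneg, div_le_one hrpos]; linarith
  have hSb : S ≤ (1-α^2)*(1-1/(r:ℝ)) := by
    rcases eq_or_lt_of_le hSnn with h0 | h0
    · rw [← h0]; exact mul_nonneg h1a hrinv
    · nlinarith [hSle, hCS]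
  -- final assembly
  have hfinal : (∑ i, c i^2) = S + (N:ℝ)/(r:ℝ)^2 := by
    have hstep : ∀ i, c i^2 = d i^2 + (2/(r:ℝ))*(d i) + 1/(r:ℝ)^2 := by
      intro i
      have hci : c i = d i + 1/(r:ℝ) := by rw [hdd]; ring
      rw [hci]; ring
    rw [Finset.sum_congr rfl fun i _ => hstep i, Finset.sum_add_distrib, Finset.sum_add_distrib,
      ← Finset.mul_sum, hd0, Finset.sum_const, Finset.card_univ, Fintype.card_fin, nsmul_eq_mul,
      hS]
    field_simp
    ring
  have hgoal : (∑ i, ‖∑ k, (starRingEnd ℂ) (y k) * v i k‖ ^ 4) = ∑ i, c i^2 := by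
    refine Finset.sum_congr rfl fun i _ => ?_
    have : c i = ‖∑ k, (starRingEnd ℂ) (y k) * v i k‖^2 := rfl
    rw [this]; ring
  have hRHS : ((N:ℝ)/(r:ℝ) + (r:ℝ) - 2)/((r:ℝ)*(1-1/(N:ℝ)))
      = (1-α^2)*(1-1/(r:ℝ)) + (N:ℝ)/(r:ℝ)^2 := by
    rw [halpha2]
    have hNne : (N:ℝ) ≠ 0 := ne_of_gt hNpos
    have hrne : (r:ℝ) ≠ 0 := ne_of_gt hrpos
    field_simp
    ring
  rw [hgoal, hfinal, hRHS]
  linarith [hSb]
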